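/- Let X be the disjoint union of fuzzy graphs X₁, …, X_t with n total vertices. Then SDI(X) = Σᵢ SDI(Xᵢ) + Σᵢ (n − |V(Xᵢ)|) · γ_s(Xᵢ), where γ_s(Xᵢ) is the strong domination number of component Xᵢ. -/

import Mathlib

open Finset

/-- A fuzzy graph on vertex type `V`. -/
structure FuzzyGraph (V : Type*) where
  ρ : V → ℝ
  υ : V → V → ℝ
  ρ_nonneg : ∀ a, 0 ≤ ρ a
  ρ_le_one : ∀ a, ρ a ≤ 1
  υ_nonneg : ∀ a b, 0 ≤ υ a b
  symm : ∀ a b, υ a b = υ b a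
  υ_le : ∀ a b, υ a b ≤ min (ρ a) (ρ b)
  loopless : ∀ a, υ a a = 0

namespace FuzzyGraph

variable {V : Type*} [Fintype V] [DecidableEq V]

/-- Strength of a path given by its list of successive vertices:
the minimum of the weights of its edges. -/
def pathStrength (X : FuzzyGraph V) : List V → ℝ
  | [] => 0
  | [_] => 0
  | [a, b] => X.υ a b
  | a :: b :: c :: l => min (X.υ a b) (X.pathStrength (b :: c :: l))

/-- `l` is a path from `a` to `b` : distinct vertices joined by positive-weight edges. -/
def IsPath (X : FuzzyGraph V) (a b : V) (l : List V) : Prop :=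
  l.Nodup ∧ l.head? = some a ∧ l.getLast? = some b ∧ 2 ≤ l.length ∧
    l.Chain' (fun x y => 0 < X.υ x y)

/-- Strength of connectedness between two vertices: maximum strength of a path. -/
noncomputable def conn (X : FuzzyGraph V) (a b : V) : ℝ :=
  sSup {s | ∃ l : List V, X.IsPath a b l ∧ s = X.pathStrength l}

/-- Delete the edge `ab` (set its weight to `0`). -/
def deleteEdge (X : FuzzyGraph V) (a b : V) : FuzzyGraph V where
  ρ := X.ρ
  υ x y := if (x = a ∧ y = b) ∨ (x = b ∧ y = a) then 0 else X.υ x y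
  ρ_nonneg := X.ρ_nonneg
  ρ_le_one := X.ρ_le_one
  υ_nonneg := by
    intro x y; split_ifs
    · exact le_rfl
    · exact X.υ_nonneg x y
  symm := by
    intro x y; try dsimp only
    by_cases h : (x = a ∧ y = b) ∨ (x = b ∧ y = a)
    · rw [if_pos h, if_pos (by tauto)]
    · rw [if_neg h, if_neg (by tauto), X.symm]
  υ_le := by
    intro x y; split_ifs
    · exact le_min (X.ρ_nonneg x) (X.ρ_nonneg y)
    · exact X.υ_le x y
  loopless := by
    intro x; split_ifs
    · rfl
    · exact X.loopless x

/-- `ab` is a strong edge (α- or β-strong). -/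
def StrongEdge (X : FuzzyGraph V) (a b : V) : Prop :=
  0 < X.υ a b ∧ (X.deleteEdge a b).conn a b ≤ X.υ a b

/-- `ab` is an α-strong edge. -/
def AlphaStrong (X : FuzzyGraph V) (a b : V) : Prop :=
  0 < X.υ a b ∧ (X.deleteEdge a b).conn a b < X.υ a b

/-- `ab` is a β-strong edge. -/
def BetaStrong (X : FuzzyGraph V) (a b : V) : Prop :=
  0 < X.υ a b ∧ X.υ a b = (X.deleteEdge a b).conn a b

/-- `ab` is a δ-edge. -/
def DeltaEdge (X : FuzzyGraph V) (a b : V) : Prop :=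
  0 < X.υ a b ∧ X.υ a b < (X.deleteEdge a b).conn a b

/-- The minimum weight of a strong edge incident at `a`. -/
noncomputable def minInc (X : FuzzyGraph V) (a : V) : ℝ :=
  sInf {w | ∃ b, X.StrongEdge a b ∧ w = X.υ a b}

/-- The weight of a set of vertices. -/
noncomputable def weight (X : FuzzyGraph V) (S : Finset V) : ℝ :=
  ∑ a ∈ S, X.minInc a

/-- `D` is a strong dominating set. -/
def IsSDS (X : FuzzyGraph V) (D : Finset V) : Prop :=
  ∀ v, v ∉ D → ∃ a ∈ D, X.StrongEdge a v

/-- `D` is a minimal strong dominating set. -/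
def IsMinimalSDS (X : FuzzyGraph V) (D : Finset V) : Prop :=
  X.IsSDS D ∧ ∀ a ∈ D, ¬ X.IsSDS (D.erase a)

/-- `D` is a minimum (least weight) strong dominating set. -/
def IsMinimumSDS (X : FuzzyGraph V) (D : Finset V) : Prop :=
  X.IsSDS D ∧ ∀ D' : Finset V, X.IsSDS D' → X.weight D ≤ X.weight D'

/-- The strong domination degree of a vertex. -/
noncomputable def sd (X : FuzzyGraph V) (u : V) : ℝ :=
  sInf {w | ∃ D : Finset V, X.IsMinimalSDS D ∧ u ∈ D ∧ w = X.weight D}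

/-- The strong domination number. -/
noncomputable def gammaS (X : FuzzyGraph V) : ℝ :=
  sInf {w | ∃ D : Finset V, X.IsSDS D ∧ w = X.weight D}

/-- The upper strong domination number. -/
noncomputable def GammaS (X : FuzzyGraph V) : ℝ :=
  sSup {w | ∃ D : Finset V, X.IsMinimalSDS D ∧ w = X.weight D}

/-- The strong domination index. -/
noncomputable def SDI (X : FuzzyGraph V) : ℝ := ∑ u : V, X.sd u

/-- `X` is connected. -/
def Connected (X : FuzzyGraph V) : Prop := ∀ a b : V, a ≠ b → ∃ l, X.IsPath a b l

/-- `X` is a strong fuzzy graph: every edge is strong. -/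
def IsStrongFG (X : FuzzyGraph V) : Prop := ∀ a b, 0 < X.υ a b → X.StrongEdge a b

/-- Underlying (support) simple graph. -/
def support (X : FuzzyGraph V) : SimpleGraph V where
  Adj a b := 0 < X.υ a b
  symm := ⟨by intro a b h; rw [X.symm]; exact h⟩
  loopless := ⟨by intro a h; rw [X.loopless] at h; exact lt_irrefl 0 h⟩

/-- `X` is a fuzzy tree. -/
def IsFuzzyTree (X : FuzzyGraph V) : Prop :=
  ∃ F : FuzzyGraph V, F.ρ = X.ρ ∧ (∀ a b, F.υ a b = X.υ a b ∨ F.υ a b = 0) ∧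
    F.support.IsTree ∧ ∀ a b, 0 < X.υ a b → F.υ a b = 0 → X.υ a b < F.conn a b

/-- The size of a fuzzy graph: the sum of all edge weights. -/
noncomputable def size (X : FuzzyGraph V) : ℝ := (∑ a : V, ∑ b : V, X.υ a b) / 2

/-- The underlying graph of `X` is a cycle. -/
def IsCycleGraph (X : FuzzyGraph V) : Prop :=
  ∃ n : ℕ, 3 ≤ n ∧ ∃ f : ZMod n ≃ V,
    ∀ x y : V, 0 < X.υ x y ↔ ∃ i : ZMod n, (x = f i ∧ y = f (i + 1)) ∨ (x = f (i + 1) ∧ y = f i)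

/-- `X` is a fuzzy cycle: a cycle with at least two edges of minimum weight. -/
def IsFuzzyCycle (X : FuzzyGraph V) : Prop :=
  X.IsCycleGraph ∧ ∃ a b c d : V, 0 < X.υ a b ∧ 0 < X.υ c d ∧
    Sym2.mk (a, b) ≠ Sym2.mk (c, d) ∧ X.υ a b = X.υ c d ∧
    ∀ x y, 0 < X.υ x y → X.υ a b ≤ X.υ x y

/-- A set of pairwise fuzzy independent vertices. -/
def IsFuzzyIndep (X : FuzzyGraph V) (S : Finset V) : Prop :=
  ∀ a ∈ S, ∀ b ∈ S, a ≠ b → ¬ X.StrongEdge a b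

/-- The strong independent domination number. -/
noncomputable def iS (X : FuzzyGraph V) : ℝ :=
  sInf {w | ∃ D : Finset V, X.IsSDS D ∧ X.IsFuzzyIndep D ∧ w = X.weight D}

/-- The strong independence number. -/
noncomputable def betaS (X : FuzzyGraph V) : ℝ :=
  sSup {w | ∃ S : Finset V, X.IsFuzzyIndep S ∧ w = X.weight S}

/-- Closed strong neighborhood. -/
def closedNbhd (X : FuzzyGraph V) (a : V) : Set V := insert a {b | X.StrongEdge a b}

/-- Open strong neighborhood. -/
def openNbhd (X : FuzzyGraph V) (a : V) : Set V := {b | X.StrongEdge a b}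

/-- Private neighborhood of `a` with respect to `S`. -/
def privNbhd (X : FuzzyGraph V) (a : V) (S : Finset V) : Set V :=
  X.closedNbhd a \ ⋃ b ∈ S.erase a, X.closedNbhd b

/-- `S` is a fuzzy irredundant set. -/
def IsIrredundant (X : FuzzyGraph V) (S : Finset V) : Prop :=
  ∀ a ∈ S, (X.privNbhd a S).Nonempty

/-- `S` is a maximal fuzzy irredundant set. -/
def IsMaximalIrredundant (X : FuzzyGraph V) (S : Finset V) : Prop :=
  X.IsIrredundant S ∧ ∀ v ∉ S, ¬ X.IsIrredundant (insert v S)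

/-- The strong irredundance number. -/
noncomputable def irS (X : FuzzyGraph V) : ℝ :=
  sInf {w | ∃ S : Finset V, X.IsMaximalIrredundant S ∧ w = X.weight S}

end FuzzyGraph
namespace FuzzyGraph

/-- The join of two fuzzy graphs on disjoint vertex sets. -/
def join {V₁ V₂ : Type*} (X₁ : FuzzyGraph V₁) (X₂ : FuzzyGraph V₂) :
    FuzzyGraph (V₁ ⊕ V₂) where
  ρ := Sum.elim X₁.ρ X₂.ρ
  υ a b := match a, b with
    | Sum.inl x, Sum.inl y => X₁.υ x y
    | Sum.inr x, Sum.inr y => X₂.υ x y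
    | Sum.inl x, Sum.inr y => min (X₁.ρ x) (X₂.ρ y)
    | Sum.inr x, Sum.inl y => min (X₂.ρ x) (X₁.ρ y)
  ρ_nonneg := by rintro (x | x) <;> simp [X₁.ρ_nonneg, X₂.ρ_nonneg]
  ρ_le_one := by rintro (x | x) <;> simp [X₁.ρ_le_one, X₂.ρ_le_one]
  υ_nonneg := by
    rintro (x | x) (y | y) <;> dsimp only
    · exact X₁.υ_nonneg x y
    · exact le_min (X₁.ρ_nonneg x) (X₂.ρ_nonneg y)
    · exact le_min (X₂.ρ_nonneg x) (X₁.ρ_nonneg y)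
    · exact X₂.υ_nonneg x y
  symm := by
    rintro (x | x) (y | y) <;> dsimp only
    · exact X₁.symm x y
    · exact min_comm _ _
    · exact min_comm _ _
    · exact X₂.symm x y
  υ_le := by
    rintro (x | x) (y | y) <;> dsimp only
    · exact X₁.υ_le x y
    · exact le_rfl
    · exact le_rfl
    · exact X₂.υ_le x y
  loopless := by
    rintro (x | x) <;> dsimp only
    · exact X₁.loopless x
    · exact X₂.loopless x

/-- The disjoint union of a family of fuzzy graphs. -/
def sigmaUnion {ι : Type*} [DecidableEq ι] {V : ι → Type*}
    (X : ∀ i, FuzzyGraph (V i)) : FuzzyGraph (Σ i, V i) where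
  ρ := fun a => (X a.1).ρ a.2
  υ := fun a b =>
    if h : a.1 = b.1 then (X b.1).υ (h ▸ a.2) b.2 else 0
  ρ_nonneg := fun a => (X a.1).ρ_nonneg a.2
  ρ_le_one := fun a => (X a.1).ρ_le_one a.2
  υ_nonneg := by
    rintro ⟨i, x⟩ ⟨j, y⟩; dsimp only
    split_ifs with h
    · exact (X j).υ_nonneg _ _
    · exact le_rfl
  symm := by
    rintro ⟨i, x⟩ ⟨j, y⟩; dsimp only
    by_cases h : i = j
    · subst h; simp [(X i).symm]
    · rw [dif_neg h, dif_neg (Ne.symm h)]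
  υ_le := by
    rintro ⟨i, x⟩ ⟨j, y⟩; dsimp only
    by_cases h : i = j
    · subst h; simpa using (X i).υ_le x y
    · rw [dif_neg h]
      exact le_min ((X i).ρ_nonneg x) ((X j).ρ_nonneg y)
  loopless := by
    rintro ⟨i, x⟩; dsimp only
    rw [dif_pos rfl]
    exact (X i).loopless x

end FuzzyGraph
section Aux
set_option linter.unusedSectionVars false
namespace FuzzyGraph

variable {V : Type*} [Fintype V] [DecidableEq V] (X : FuzzyGraph V)

theorem ext' {X Y : FuzzyGraph V} (hρ : X.ρ = Y.ρ) (hυ : X.υ = Y.υ) : X = Y := by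
  cases X; cases Y; simp_all

theorem minInc_nonneg (a : V) : 0 ≤ X.minInc a := by
  apply Real.sInf_nonneg
  rintro w ⟨b, _, rfl⟩
  exact X.υ_nonneg a b

theorem weight_nonneg (D : Finset V) : 0 ≤ X.weight D :=
  Finset.sum_nonneg fun a _ => X.minInc_nonneg a

theorem weight_mono {D E : Finset V} (h : D ⊆ E) : X.weight D ≤ X.weight E :=
  Finset.sum_le_sum_of_subset_of_nonneg h fun a _ _ => X.minInc_nonneg a

theorem deleteEdge_comm (a b : V) : X.deleteEdge a b = X.deleteEdge b a := by
  refine ext' rfl ?_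
  funext x y
  simp only [deleteEdge]
  by_cases h : (x = a ∧ y = b) ∨ (x = b ∧ y = a)
  · rw [if_pos h, if_pos (by tauto)]
  · rw [if_neg h, if_neg (by tauto)]

theorem pathStrength_cons (a b : V) {l : List V} (hl : l ≠ []) :
    X.pathStrength (a :: b :: l) = min (X.υ a b) (X.pathStrength (b :: l)) := by
  cases l with
  | nil => exact absurd rfl hl
  | cons c l => rfl

theorem pathStrength_append (y z : V) :
    ∀ (l : List V), l ≠ [] →
      X.pathStrength (l ++ [y, z]) = min (X.pathStrength (l ++ [y])) (X.υ y z)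
  | [], h => absurd rfl h
  | [c], _ => by simp [pathStrength]
  | c :: d :: l, _ => by
    have h1 : (d :: l) ++ [y, z] ≠ [] := by simp
    have h2 : (d :: l) ++ [y] ≠ [] := by simp
    have IH := pathStrength_append y z (d :: l) (by simp)
    simp only [List.cons_append] at *
    rw [X.pathStrength_cons c d (by simp), X.pathStrength_cons c d (by simp)]
    rw [IH, min_assoc]

theorem pathStrength_reverse : ∀ l : List V, X.pathStrength l.reverse = X.pathStrength l
  | [] => rfl
  | [_] => rfl
  | [a, b] => by simp [pathStrength, X.symm a b]
  | a :: b :: c :: l => by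
    have h1 : (a :: b :: c :: l).reverse = (c :: l).reverse ++ [b, a] := by simp
    have h2 : (b :: c :: l).reverse = (c :: l).reverse ++ [b] := by simp
    rw [h1, X.pathStrength_append b a _ (by simp), ← h2,
      pathStrength_reverse (b :: c :: l),
      X.pathStrength_cons a b (by simp), X.symm b a, min_comm]

theorem IsPath.reverse {X : FuzzyGraph V} {a b : V} {l : List V} (h : X.IsPath a b l) :
    X.IsPath b a l.reverse := by
  obtain ⟨hnd, hh, hl, hlen, hc⟩ := h
  refine ⟨(List.nodup_reverse.mpr hnd), ?_, ?_, by simpa using hlen, ?_⟩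
  · rwa [List.head?_reverse]
  · rwa [List.getLast?_reverse]
  · rw [List.Chain', List.isChain_reverse]
    refine hc.imp ?_
    intro x y hxy
    rwa [X.symm]

theorem conn_symm (a b : V) : X.conn a b = X.conn b a := by
  unfold conn
  congr 1
  ext s
  constructor
  · rintro ⟨l, hp, rfl⟩
    exact ⟨l.reverse, hp.reverse, (X.pathStrength_reverse l).symm⟩
  · rintro ⟨l, hp, rfl⟩
    exact ⟨l.reverse, hp.reverse, (X.pathStrength_reverse l).symm⟩

theorem StrongEdge.symm' {X : FuzzyGraph V} {a b : V} (h : X.StrongEdge a b) :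
    X.StrongEdge b a := by
  obtain ⟨h1, h2⟩ := h
  rw [X.symm] at h1
  refine ⟨h1, ?_⟩
  rw [X.deleteEdge_comm b a, (X.deleteEdge a b).conn_symm b a, X.symm b a]
  exact h2

end FuzzyGraph
end Aux

section AuxB
set_option linter.unusedSectionVars false
namespace FuzzyGraph

variable {V : Type*} [Fintype V] [DecidableEq V] (X : FuzzyGraph V)

theorem isSDS_univ : X.IsSDS Finset.univ := fun v hv => absurd (Finset.mem_univ v) hv

theorem exists_minimalSDS_subset : ∀ D : Finset V, X.IsSDS D →
    ∃ D', D' ⊆ D ∧ X.IsMinimalSDS D' := by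
  intro D
  induction D using Finset.strongInductionOn with
  | _ D IH =>
    intro h
    by_cases hm : ∀ a ∈ D, ¬ X.IsSDS (D.erase a)
    · exact ⟨D, Finset.Subset.refl D, h, hm⟩
    · push_neg at hm
      obtain ⟨a, ha, hSDS⟩ := hm
      obtain ⟨D', hsub, hmin⟩ := IH (D.erase a) (Finset.erase_ssubset ha) hSDS
      exact ⟨D', hsub.trans (Finset.erase_subset a D), hmin⟩

theorem exists_minimalSDS : ∃ D, X.IsMinimalSDS D := by
  obtain ⟨D, _, h⟩ := X.exists_minimalSDS_subset Finset.univ X.isSDS_univ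
  exact ⟨D, h⟩

theorem sdsSet_bddBelow : BddBelow {w | ∃ D : Finset V, X.IsSDS D ∧ w = X.weight D} :=
  ⟨0, by rintro w ⟨D, _, rfl⟩; exact X.weight_nonneg D⟩

theorem minSdsSet_bddBelow :
    BddBelow {w | ∃ D : Finset V, X.IsMinimalSDS D ∧ w = X.weight D} :=
  ⟨0, by rintro w ⟨D, _, rfl⟩; exact X.weight_nonneg D⟩

theorem sdSet_bddBelow (u : V) :
    BddBelow {w | ∃ D : Finset V, X.IsMinimalSDS D ∧ u ∈ D ∧ w = X.weight D} :=
  ⟨0, by rintro w ⟨D, _, _, rfl⟩; exact X.weight_nonneg D⟩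

theorem gammaS_eq_sInf_minimal :
    X.gammaS = sInf {w | ∃ D : Finset V, X.IsMinimalSDS D ∧ w = X.weight D} := by
  obtain ⟨D₀, hD₀⟩ := X.exists_minimalSDS
  apply le_antisymm
  · refine le_csInf ⟨_, D₀, hD₀, rfl⟩ ?_
    rintro w ⟨D, hD, rfl⟩
    exact csInf_le X.sdsSet_bddBelow ⟨D, hD.1, rfl⟩
  · refine le_csInf ⟨_, Finset.univ, X.isSDS_univ, rfl⟩ ?_
    rintro w ⟨D, hD, rfl⟩
    obtain ⟨D', hsub, hmin⟩ := X.exists_minimalSDS_subset D hD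
    exact le_trans (csInf_le X.minSdsSet_bddBelow ⟨D', hmin, rfl⟩) (X.weight_mono hsub)

theorem gammaS_nonneg : 0 ≤ X.gammaS :=
  Real.sInf_nonneg (by rintro w ⟨D, _, rfl⟩; exact X.weight_nonneg D)

theorem isMinimalSDS_of_maxIndep {I : Finset V} (hI : X.IsFuzzyIndep I)
    (hmax : ∀ v ∉ I, ¬ X.IsFuzzyIndep (insert v I)) : X.IsMinimalSDS I := by
  constructor
  · intro v hv
    by_contra hcon
    push_neg at hcon
    apply hmax v hv
    intro a ha b hb hab hS
    rcases Finset.mem_insert.mp ha with rfl | ha'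
    · rcases Finset.mem_insert.mp hb with rfl | hb'
      · exact hab rfl
      · exact hcon b hb' hS.symm'
    · rcases Finset.mem_insert.mp hb with rfl | hb'
      · exact hcon a ha' hS
      · exact hI a ha' b hb' hab hS
  · intro a ha hSDS
    obtain ⟨b, hb, hS⟩ := hSDS a (Finset.notMem_erase a I)
    exact hI b (Finset.mem_of_mem_erase hb) a ha (Finset.ne_of_mem_erase hb) hS

theorem exists_minimalSDS_mem (u : V) : ∃ D, X.IsMinimalSDS D ∧ u ∈ D := by
  classical
  set s := Finset.univ.filter (fun S : Finset V => u ∈ S ∧ X.IsFuzzyIndep S) with hs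
  have hne : s.Nonempty := by
    refine ⟨{u}, ?_⟩
    simp only [hs, Finset.mem_filter, Finset.mem_univ, true_and]
    refine ⟨Finset.mem_singleton_self u, ?_⟩
    intro a ha b hb hab
    simp only [Finset.mem_singleton] at ha hb
    subst ha; subst hb; exact absurd rfl hab
  obtain ⟨I, hImem, hImax⟩ := s.exists_max_image Finset.card hne
  simp only [hs, Finset.mem_filter, Finset.mem_univ, true_and] at hImem
  obtain ⟨huI, hIindep⟩ := hImem
  refine ⟨I, X.isMinimalSDS_of_maxIndep hIindep ?_, huI⟩
  intro v hv hindep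
  have hmem : insert v I ∈ s := by
    simp only [hs, Finset.mem_filter, Finset.mem_univ, true_and]
    exact ⟨Finset.mem_insert_of_mem huI, hindep⟩
  have := hImax _ hmem
  rw [Finset.card_insert_of_notMem hv] at this
  omega

end FuzzyGraph
end AuxB

section AuxC
set_option linter.unusedSectionVars false
namespace FuzzyGraph

variable {ι : Type*} [Fintype ι] [DecidableEq ι] {V : ι → Type*}
  [∀ i, Fintype (V i)] [∀ i, DecidableEq (V i)]

theorem sigmaUnion_υ_same (X : ∀ i, FuzzyGraph (V i)) (k : ι) (x y : V k) :
    (sigmaUnion X).υ ⟨k, x⟩ ⟨k, y⟩ = (X k).υ x y := by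
  simp [sigmaUnion]

theorem sigmaUnion_υ_cross (X : ∀ i, FuzzyGraph (V i)) {a b : Σ i, V i} (h : a.1 ≠ b.1) :
    (sigmaUnion X).υ a b = 0 := by
  obtain ⟨i, x⟩ := a; obtain ⟨j, y⟩ := b
  simp only [sigmaUnion]
  exact dif_neg h

/-- Transfer of path strength along `Sigma.mk k`. -/
theorem pathStrength_map_mk (Y : FuzzyGraph (Σ i, V i)) {k : ι} (Z : FuzzyGraph (V k))
    (hsame : ∀ x y : V k, Y.υ ⟨k, x⟩ ⟨k, y⟩ = Z.υ x y) :
    ∀ l : List (V k), Y.pathStrength (l.map (Sigma.mk k)) = Z.pathStrength l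
  | [] => rfl
  | [_] => rfl
  | [x, y] => hsame x y
  | x :: y :: z :: l => by
    have IH := pathStrength_map_mk Y Z hsame (y :: z :: l)
    simp only [List.map_cons] at *
    rw [Y.pathStrength_cons _ _ (by simp), Z.pathStrength_cons _ _ (by simp), IH, hsame]

/-- In a graph with no positive cross-component edges, chains stay in one component. -/
theorem chain_comp (Y : FuzzyGraph (Σ i, V i))
    (hcross : ∀ a b : Σ i, V i, a.1 ≠ b.1 → Y.υ a b = 0) :
    ∀ l : List (Σ i, V i), l.Chain' (fun x y => 0 < Y.υ x y) →
      ∀ a, l.head? = some a → ∀ v ∈ l, v.1 = a.1 := by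
  intro l
  induction l with
  | nil => intro _ a _ v hv; simp at hv
  | cons x t IH =>
    intro hc a ha v hv
    simp only [List.head?_cons, Option.some.injEq] at ha
    subst ha
    rcases List.mem_cons.mp hv with rfl | hv'
    · rfl
    · cases t with
      | nil => simp at hv'
      | cons y t' =>
        have hxy : 0 < Y.υ x y := (List.isChain_cons_cons.mp hc).1
        have h1 : y.1 = x.1 := by
          by_contra hne
          rw [hcross x y (fun hh => hne hh.symm)] at hxy
          exact lt_irrefl 0 hxy
        have h2 := IH (List.isChain_cons_cons.mp hc).2 y rfl v hv'
        rw [h2, h1]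

/-- Transfer of connectivity strength to a component. -/
theorem conn_comp (Y : FuzzyGraph (Σ i, V i))
    (hcross : ∀ a b : Σ i, V i, a.1 ≠ b.1 → Y.υ a b = 0)
    {k : ι} (Z : FuzzyGraph (V k))
    (hsame : ∀ x y : V k, Y.υ ⟨k, x⟩ ⟨k, y⟩ = Z.υ x y) (a b : V k) :
    Y.conn ⟨k, a⟩ ⟨k, b⟩ = Z.conn a b := by
  unfold conn
  congr 1
  ext s
  constructor
  · rintro ⟨l, ⟨hnd, hh, hg, hlen, hc⟩, rfl⟩
    have hcomp : ∀ v ∈ l, v.1 = k := fun v hv => chain_comp Y hcross l hc ⟨k, a⟩ hh v hv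
    classical
    set f : (Σ i, V i) → V k := fun v => if h : v.1 = k then h ▸ v.2 else a with hf
    have hmap : (l.map f).map (Sigma.mk k) = l := by
      rw [List.map_map]
      conv_rhs => rw [← List.map_id l]
      apply List.map_congr_left
      intro v hv
      obtain ⟨i, x⟩ := v
      have hik : i = k := hcomp ⟨i, x⟩ hv
      subst hik
      simp [hf]
    refine ⟨l.map f, ⟨?_, ?_, ?_, ?_, ?_⟩, ?_⟩
    · have := hmap ▸ hnd
      exact this.of_map _
    · have := hmap ▸ hh
      rw [List.head?_map] at this
      cases hml : (l.map f).head? with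
      | none => rw [hml] at this; simp at this
      | some w =>
        rw [hml] at this
        simp only [Option.map_some, Option.some.injEq] at this
        exact congrArg some (sigma_mk_injective this)
    · have := hmap ▸ hg
      rw [List.getLast?_map] at this
      cases hml : (l.map f).getLast? with
      | none => rw [hml] at this; simp at this
      | some w =>
        rw [hml] at this
        simp only [Option.map_some, Option.some.injEq] at this
        exact congrArg some (sigma_mk_injective this)
    · have : l.length = (l.map f).length := by rw [← hmap]; simp
      omega
    · have hc' := hc
      rw [← hmap, List.Chain', List.isChain_map] at hc'
      refine hc'.imp ?_
      intro x y hxy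
      rwa [hsame] at hxy
    · rw [← pathStrength_map_mk Y Z hsame (l.map f), hmap]
  · rintro ⟨l, ⟨hnd, hh, hg, hlen, hc⟩, rfl⟩
    refine ⟨l.map (Sigma.mk k), ⟨hnd.map sigma_mk_injective, ?_, ?_, by simpa using hlen, ?_⟩, ?_⟩
    · rw [List.head?_map, hh]; rfl
    · rw [List.getLast?_map, hg]; rfl
    · rw [List.Chain', List.isChain_map]
      refine hc.imp ?_
      intro x y hxy
      rwa [hsame]
    · rw [pathStrength_map_mk Y Z hsame]

theorem sigmaUnion_deleteEdge_cross (X : ∀ i, FuzzyGraph (V i)) (e f : Σ i, V i)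
    {a b : Σ i, V i} (h : a.1 ≠ b.1) : ((sigmaUnion X).deleteEdge e f).υ a b = 0 := by
  simp only [deleteEdge]
  split_ifs with hh
  · rfl
  · exact sigmaUnion_υ_cross X h

theorem sigmaUnion_strongEdge_same (X : ∀ i, FuzzyGraph (V i)) {k : ι} (x y : V k) :
    (sigmaUnion X).StrongEdge ⟨k, x⟩ ⟨k, y⟩ ↔ (X k).StrongEdge x y := by
  have hconn : ((sigmaUnion X).deleteEdge ⟨k, x⟩ ⟨k, y⟩).conn ⟨k, x⟩ ⟨k, y⟩ =
      ((X k).deleteEdge x y).conn x y := by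
    apply conn_comp
    · exact fun a b h => sigmaUnion_deleteEdge_cross X _ _ h
    · intro a b
      simp only [deleteEdge]
      have hcond : ((⟨k, a⟩ : Σ i, V i) = ⟨k, x⟩ ∧ (⟨k, b⟩ : Σ i, V i) = ⟨k, y⟩) ∨
          ((⟨k, a⟩ : Σ i, V i) = ⟨k, y⟩ ∧ (⟨k, b⟩ : Σ i, V i) = ⟨k, x⟩) ↔
          (a = x ∧ b = y) ∨ (a = y ∧ b = x) := by
        constructor
        · rintro (⟨h1, h2⟩ | ⟨h1, h2⟩)
          · exact Or.inl ⟨sigma_mk_injective h1, sigma_mk_injective h2⟩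
          · exact Or.inr ⟨sigma_mk_injective h1, sigma_mk_injective h2⟩
        · rintro (⟨rfl, rfl⟩ | ⟨rfl, rfl⟩)
          · exact Or.inl ⟨rfl, rfl⟩
          · exact Or.inr ⟨rfl, rfl⟩
      rw [if_congr hcond rfl rfl]
      split_ifs with hh
      · rfl
      · exact sigmaUnion_υ_same X k a b
  unfold StrongEdge
  rw [sigmaUnion_υ_same, hconn]

theorem sigmaUnion_strongEdge_cross (X : ∀ i, FuzzyGraph (V i)) {a b : Σ i, V i}
    (h : a.1 ≠ b.1) : ¬ (sigmaUnion X).StrongEdge a b := by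
  rintro ⟨h1, -⟩
  rw [sigmaUnion_υ_cross X h] at h1
  exact lt_irrefl 0 h1

theorem sigmaUnion_minInc (X : ∀ i, FuzzyGraph (V i)) {k : ι} (u : V k) :
    (sigmaUnion X).minInc ⟨k, u⟩ = (X k).minInc u := by
  unfold minInc
  congr 1
  ext w
  constructor
  · rintro ⟨⟨j, y⟩, hS, rfl⟩
    have hjk : k = j := by
      by_contra hne
      exact sigmaUnion_strongEdge_cross X hne hS
    subst hjk
    exact ⟨y, (sigmaUnion_strongEdge_same X u y).mp hS, (sigmaUnion_υ_same X k u y)⟩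
  · rintro ⟨y, hS, rfl⟩
    exact ⟨⟨k, y⟩, (sigmaUnion_strongEdge_same X u y).mpr hS, (sigmaUnion_υ_same X k u y).symm⟩

/-- The slice of a vertex set in one component. -/
def slice (D : Finset (Σ i, V i)) (i : ι) : Finset (V i) :=
  Finset.univ.filter (fun v => (⟨i, v⟩ : Σ j, V j) ∈ D)

theorem mem_slice {D : Finset (Σ i, V i)} {i : ι} {v : V i} :
    v ∈ slice D i ↔ (⟨i, v⟩ : Σ j, V j) ∈ D := by
  simp [slice]

theorem sigma_slice (D : Finset (Σ i, V i)) :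
    (Finset.univ.sigma fun i => slice D i) = D := by
  ext ⟨i, v⟩
  simp [Finset.mem_sigma, mem_slice]

theorem slice_sigma (Df : ∀ i, Finset (V i)) (i : ι) :
    slice (Finset.univ.sigma fun j => Df j) i = Df i := by
  ext v
  simp [mem_slice, Finset.mem_sigma]

theorem slice_erase_same (D : Finset (Σ i, V i)) (i : ι) (a : V i) :
    slice (D.erase ⟨i, a⟩) i = (slice D i).erase a := by
  ext v
  simp only [mem_slice, Finset.mem_erase, mem_slice]
  constructor
  · rintro ⟨h1, h2⟩
    exact ⟨fun hh => h1 (by rw [hh]), h2⟩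
  · rintro ⟨h1, h2⟩
    exact ⟨fun hh => h1 (sigma_mk_injective hh), h2⟩

theorem slice_erase_ne (D : Finset (Σ i, V i)) {i j : ι} (h : i ≠ j) (a : V i) :
    slice (D.erase ⟨i, a⟩) j = slice D j := by
  ext v
  simp only [mem_slice, Finset.mem_erase]
  constructor
  · rintro ⟨-, h2⟩; exact h2
  · intro h2
    refine ⟨fun hh => ?_, h2⟩
    have : j = i := congrArg Sigma.fst hh
    exact h this.symm

theorem sigmaUnion_weight (X : ∀ i, FuzzyGraph (V i)) (D : Finset (Σ i, V i)) :
    (sigmaUnion X).weight D = ∑ i : ι, (X i).weight (slice D i) := by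
  unfold weight
  conv_lhs => rw [← sigma_slice D]
  rw [Finset.sum_sigma]
  exact Finset.sum_congr rfl fun i _ => Finset.sum_congr rfl fun v _ => sigmaUnion_minInc X v

theorem sigmaUnion_isSDS_iff (X : ∀ i, FuzzyGraph (V i)) (D : Finset (Σ i, V i)) :
    (sigmaUnion X).IsSDS D ↔ ∀ i, (X i).IsSDS (slice D i) := by
  constructor
  · intro h i v hv
    obtain ⟨⟨j, y⟩, hmem, hS⟩ := h ⟨i, v⟩ (fun hc => hv (mem_slice.mpr hc))
    have hji : j = i := by
      by_contra hne
      exact sigmaUnion_strongEdge_cross X hne hS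
    subst hji
    exact ⟨y, mem_slice.mpr hmem, (sigmaUnion_strongEdge_same X y v).mp hS⟩
  · rintro h ⟨i, v⟩ hv
    obtain ⟨y, hy, hS⟩ := h i v (fun hc => hv (mem_slice.mp hc))
    exact ⟨⟨i, y⟩, mem_slice.mp hy, (sigmaUnion_strongEdge_same X y v).mpr hS⟩

theorem sigmaUnion_isMinimalSDS_iff (X : ∀ i, FuzzyGraph (V i)) (D : Finset (Σ i, V i)) :
    (sigmaUnion X).IsMinimalSDS D ↔ ∀ i, (X i).IsMinimalSDS (slice D i) := by
  constructor
  · rintro ⟨hSDS, hmin⟩ i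
    refine ⟨(sigmaUnion_isSDS_iff X D).mp hSDS i, ?_⟩
    intro a ha hcon
    apply hmin ⟨i, a⟩ (mem_slice.mp ha)
    rw [sigmaUnion_isSDS_iff]
    intro j
    by_cases hij : i = j
    · subst hij
      rw [slice_erase_same]
      exact hcon
    · rw [slice_erase_ne D hij]
      exact (sigmaUnion_isSDS_iff X D).mp hSDS j
  · intro h
    refine ⟨(sigmaUnion_isSDS_iff X D).mpr fun i => (h i).1, ?_⟩
    rintro ⟨i, a⟩ ha hcon
    apply (h i).2 a (mem_slice.mpr ha)
    have := (sigmaUnion_isSDS_iff X _).mp hcon i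
    rwa [slice_erase_same] at this

end FuzzyGraph
end AuxC

section AuxD
set_option linter.unusedSectionVars false
namespace FuzzyGraph

variable {ι : Type*} [Fintype ι] [DecidableEq ι] {V : ι → Type*}
  [∀ i, Fintype (V i)] [∀ i, DecidableEq (V i)]

theorem sigmaUnion_sd (X : ∀ i, FuzzyGraph (V i)) (k : ι) (u : V k) :
    (sigmaUnion X).sd ⟨k, u⟩ = (X k).sd u + ∑ i ∈ Finset.univ.erase k, (X i).gammaS := by
  classical
  have hfam : ∀ i : ι, ∃ E : Finset (V i), (X i).IsMinimalSDS E ∧ ∀ h : k = i, h ▸ u ∈ E := by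
    intro i
    by_cases hik : i = k
    · subst hik
      obtain ⟨E, hE, huE⟩ := (X i).exists_minimalSDS_mem u
      exact ⟨E, hE, fun _ => huE⟩
    · obtain ⟨E, hE⟩ := (X i).exists_minimalSDS
      exact ⟨E, hE, fun h => absurd h.symm hik⟩
  have hSne : {w | ∃ D, (sigmaUnion X).IsMinimalSDS D ∧ (⟨k, u⟩ : Σ j, V j) ∈ D ∧
      w = (sigmaUnion X).weight D}.Nonempty := by
    choose Df hmin hu using hfam
    refine ⟨_, Finset.univ.sigma Df, ?_, ?_, rfl⟩
    · rw [sigmaUnion_isMinimalSDS_iff]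
      intro i
      rw [slice_sigma]
      exact hmin i
    · exact Finset.mem_sigma.mpr ⟨Finset.mem_univ k, hu k rfl⟩
  have hsdne : {w | ∃ D : Finset (V k), (X k).IsMinimalSDS D ∧ u ∈ D ∧
      w = (X k).weight D}.Nonempty := by
    obtain ⟨E, hE, huE⟩ := (X k).exists_minimalSDS_mem u
    exact ⟨_, E, hE, huE, rfl⟩
  apply le_antisymm
  · apply le_of_forall_pos_le_add
    intro ε hε
    have hcard : (0:ℝ) < Fintype.card ι := by
      have : 0 < Fintype.card ι := Fintype.card_pos_iff.mpr ⟨k⟩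
      exact_mod_cast this
    set ε' : ℝ := ε / Fintype.card ι with hε'def
    have hε' : 0 < ε' := div_pos hε hcard
    have hfam2 : ∀ i : ι, ∃ E : Finset (V i), (X i).IsMinimalSDS E ∧
        (X i).weight E < (if k = i then (X k).sd u else (X i).gammaS) + ε' ∧
        ∀ h : k = i, h ▸ u ∈ E := by
      intro i
      by_cases hik : k = i
      · subst hik
        obtain ⟨w, ⟨E, hE, huE, rfl⟩, hw⟩ := Real.lt_sInf_add_pos hsdne hε'
        refine ⟨E, hE, ?_, fun _ => huE⟩
        rw [if_pos rfl]
        exact hw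
      · obtain ⟨E, hE⟩ := (X i).exists_minimalSDS
        have hne : {w | ∃ D : Finset (V i), (X i).IsMinimalSDS D ∧ w = (X i).weight D}.Nonempty :=
          ⟨_, E, hE, rfl⟩
        obtain ⟨w, ⟨E', hE', rfl⟩, hw⟩ := Real.lt_sInf_add_pos hne hε'
        refine ⟨E', hE', ?_, fun h => absurd h hik⟩
        rw [if_neg hik, (X i).gammaS_eq_sInf_minimal]
        exact hw
    choose Df hmin hw hu using hfam2
    set D := Finset.univ.sigma Df with hD
    have hDmin : (sigmaUnion X).IsMinimalSDS D := by
      rw [sigmaUnion_isMinimalSDS_iff]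
      intro i
      rw [hD, slice_sigma]
      exact hmin i
    have hDmem : (⟨k, u⟩ : Σ j, V j) ∈ D := Finset.mem_sigma.mpr ⟨Finset.mem_univ k, hu k rfl⟩
    have h1 : (sigmaUnion X).sd ⟨k, u⟩ ≤ (sigmaUnion X).weight D :=
      csInf_le ((sigmaUnion X).sdSet_bddBelow ⟨k, u⟩) ⟨D, hDmin, hDmem, rfl⟩
    have h2 : (sigmaUnion X).weight D = ∑ i : ι, (X i).weight (Df i) := by
      rw [sigmaUnion_weight]
      exact Finset.sum_congr rfl fun i _ => by rw [hD, slice_sigma]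
    haveI : Nonempty ι := ⟨k⟩
    have h3 : ∑ i : ι, (X i).weight (Df i) <
        ∑ i : ι, ((if k = i then (X k).sd u else (X i).gammaS) + ε') :=
      Finset.sum_lt_sum_of_nonempty Finset.univ_nonempty (fun i _ => hw i)
    have h4 : ∑ i : ι, ((if k = i then (X k).sd u else (X i).gammaS) + ε') =
        ((X k).sd u + ∑ i ∈ Finset.univ.erase k, (X i).gammaS) + ε := by
      have e1 : ∑ i : ι, (if k = i then (X k).sd u else (X i).gammaS) =
          (X k).sd u + ∑ i ∈ Finset.univ.erase k, (X i).gammaS := by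
        rw [← Finset.add_sum_erase _ _ (Finset.mem_univ k), if_pos rfl]
        congr 1
        refine Finset.sum_congr rfl fun i hi => ?_
        exact if_neg fun h => (Finset.ne_of_mem_erase hi) h.symm
      have e2 : (Fintype.card ι : ℝ) * ε' = ε := by
        rw [hε'def, mul_comm, div_mul_cancel₀ _ (ne_of_gt hcard)]
      rw [Finset.sum_add_distrib, e1, Finset.sum_const, Finset.card_univ, nsmul_eq_mul, e2]
    linarith
  · refine le_csInf hSne ?_
    rintro w ⟨D, hDmin, hDmem, rfl⟩
    rw [sigmaUnion_weight]
    have hslice := (sigmaUnion_isMinimalSDS_iff X D).mp hDmin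
    rw [← Finset.add_sum_erase _ _ (Finset.mem_univ k)]
    apply add_le_add
    · exact csInf_le ((X k).sdSet_bddBelow u) ⟨slice D k, hslice k, mem_slice.mpr hDmem, rfl⟩
    · refine Finset.sum_le_sum fun i hi => ?_
      rw [(X i).gammaS_eq_sInf_minimal]
      exact csInf_le (X i).minSdsSet_bddBelow ⟨slice D i, hslice i, rfl⟩

end FuzzyGraph
end AuxD

/-- SDI of a disjoint union. -/
theorem FuzzyGraph.SDI_sigmaUnion {ι : Type*} [Fintype ι] [DecidableEq ι]
    {V : ι → Type*} [∀ i, Fintype (V i)] [∀ i, DecidableEq (V i)]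
    (X : ∀ i, FuzzyGraph (V i)) :
    (FuzzyGraph.sigmaUnion X).SDI =
      (∑ i : ι, (X i).SDI) +
        ∑ i : ι, ((Fintype.card (Σ j, V j) : ℝ) - (Fintype.card (V i) : ℝ)) * (X i).gammaS := by
  classical
  simp only [SDI]
  rw [← Finset.univ_sigma_univ, Finset.sum_sigma]
  have hstep : ∀ k : ι, ∑ u : V k, (sigmaUnion X).sd ⟨k, u⟩ =
      (∑ u : V k, (X k).sd u) +
        (Fintype.card (V k) : ℝ) * ∑ i ∈ Finset.univ.erase k, (X i).gammaS := by
    intro k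
    simp only [sigmaUnion_sd X k]
    rw [Finset.sum_add_distrib, Finset.sum_const, Finset.card_univ, nsmul_eq_mul]
  rw [Finset.sum_congr rfl fun k _ => hstep k, Finset.sum_add_distrib]
  congr 1
  have herase : ∀ k : ι, ∑ i ∈ Finset.univ.erase k, (X i).gammaS =
      (∑ i : ι, (X i).gammaS) - (X k).gammaS := fun k =>
    Finset.sum_erase_eq_sub (Finset.mem_univ k)
  have hN : (Fintype.card (Σ j, V j) : ℝ) = ∑ j : ι, (Fintype.card (V j) : ℝ) := by
    rw [Fintype.card_sigma]
    push_cast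
    rfl
  simp only [herase, hN, mul_sub, sub_mul, Finset.sum_sub_distrib]
  congr 1
  rw [← Finset.sum_mul, ← Finset.mul_sum]
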